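/- Let p, q ≥ 2 be relatively prime integers, let t > 0, let k ≥ 2t+1, and let w₁, w₂ be words of length k over A_{pq}. Then: (1) if int(w₁) < q^{2t}, then int(F_{p,q}^t(w₁)) = 0; and (2) if int(w₂) ≡ int(w₁) + q^{2t} (mod (pq)^k), then int(F_{p,q}^t(w₂)) ≡ int(F_{p,q}^t(w₁)) + 1 (mod (pq)^{k−2t}). -/

import Mathlib

set_option maxHeartbeats 1000000


/-- The local rule multiplying by `p` in base `pq`: writing `x = x₁q + x₀` with
`x₀ ∈ {0,…,q-1}`, `x₁ ∈ {0,…,p-1}`, we have `g p q x y = x₀p + y₁`. -/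
def g (p q x y : ℕ) : ℕ := x % q * p + y / q

/-- `G_{p,q}` applied to a word. -/
def Gw (p q : ℕ) (w : List ℕ) : List ℕ := List.zipWith (g p q) w w.tail

/-- `F_{p,q}` applied to a word: the `i`-th letter of the image is
`f_{p,q}(w(i), w(i+1), w(i+2))`; the image is two letters shorter. -/
def Fw (p q : ℕ) (w : List ℕ) : List ℕ := Gw p q (Gw p q w)

/-- `int(w)`: the integer having `w` as a base-`b` representation
(the first letter of `w` is the most significant digit). -/
def intw (b : ℕ) (w : List ℕ) : ℕ := Nat.ofDigits b w.reverse

lemma intw_cons (b a : ℕ) (w : List ℕ) :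
    intw b (a :: w) = intw b w + b ^ w.length * a := by
  simp [intw, Nat.ofDigits_append, Nat.ofDigits_singleton]

lemma intw_lt {b : ℕ} (hb : 1 < b) {w : List ℕ} (hw : ∀ x ∈ w, x < b) :
    intw b w < b ^ w.length := by
  have := Nat.ofDigits_lt_base_pow_length hb (l := w.reverse) (by simpa using hw)
  simpa [intw] using this

lemma Gw_length (p q : ℕ) (w : List ℕ) : (Gw p q w).length = w.length - 1 := by
  simp [Gw]

lemma g_lt {p q x y : ℕ} (hp : 0 < p) (hq : 0 < q) (hy : y < p * q) :
    g p q x y < p * q := by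
  have h1 : x % q < q := Nat.mod_lt _ hq
  have h2 : y / q < p := Nat.div_lt_of_lt_mul (by rwa [mul_comm])
  calc g p q x y = x % q * p + y / q := rfl
    _ < q * p := by nlinarith
    _ = p * q := mul_comm _ _

lemma Gw_bound {p q : ℕ} (hp : 0 < p) (hq : 0 < q) :
    ∀ w : List ℕ, (∀ x ∈ w, x < p * q) → ∀ x ∈ Gw p q w, x < p * q
  | [], _ => by simp [Gw]
  | [a], _ => by simp [Gw]
  | a :: b :: w, hw => by
    intro x hx
    have hGcons : Gw p q (a :: b :: w) = g p q a b :: Gw p q (b :: w) := rfl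
    rw [hGcons, List.mem_cons] at hx
    rcases hx with h | h
    · subst h; exact g_lt hp hq (hw b (by simp))
    · exact Gw_bound hp hq (b :: w) (fun y hy => hw y (List.mem_cons_of_mem _ hy)) x h

lemma intw_Gw {p q : ℕ} (hp : 2 ≤ p) (hq : 2 ≤ q) :
    ∀ w : List ℕ, (∀ x ∈ w, x < p * q) →
      intw (p * q) (Gw p q w) = intw (p * q) w / q % (p * q) ^ (w.length - 1)
  | [], _ => by simp [Gw, intw]
  | [a], _ => by simp [Gw, intw, Nat.mod_one]
  | a :: b :: w, hw => by
    have hq0 : 0 < q := by omega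
    have hone : 1 < p * q := by nlinarith
    have hbw : ∀ x ∈ b :: w, x < p * q := fun x hx => hw x (List.mem_cons_of_mem _ hx)
    have IH := intw_Gw hp hq (b :: w) hbw
    have hGcons : Gw p q (a :: b :: w) = g p q a b :: Gw p q (b :: w) := rfl
    set e := w.length with he
    set B := (p * q) ^ e with hB
    have hBpos : 0 < B := pow_pos (by positivity) _
    set n' := intw (p * q) (b :: w) with hn'
    have hr : intw (p * q) w < B := intw_lt hone (fun x hx => hbw x (List.mem_cons_of_mem _ hx))
    have hn'B : n' / B = b := by
      rw [hn', intw_cons, ← he, ← hB, Nat.add_mul_div_left _ _ hBpos, Nat.div_eq_of_lt hr]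
      omega
    have hdiv : n' / q / B = b / q := by
      rw [Nat.div_div_eq_div_mul, mul_comm, ← Nat.div_div_eq_div_mul, hn'B]
    have hsplit : n' / q = b / q * B + n' / q % B := by
      conv_lhs => rw [← Nat.div_add_mod (n' / q) B, hdiv]
      ring
    have hlenG : (Gw p q (b :: w)).length = e := by rw [Gw_length]; simp [he]
    have hlen : (b :: w).length - 1 = e := by simp [he]
    have hlen2 : (a :: b :: w).length - 1 = e + 1 := by simp [he]
    rw [hGcons, intw_cons, IH, hlenG, hlen, hlen2, intw_cons (p*q) a (b::w), ← hn']
    have hlen3 : (b :: w).length = e + 1 := by simp [he]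
    rw [hlen3]
    -- goal now: g a b * B + n'/q % B  =  (n' + (p*q)^(e+1) * a)/q % (p*q)^(e+1)
    have hpow : (p * q) ^ (e + 1) = p * q * B := by rw [pow_succ]; ring
    rw [hpow]
    have hdivstep : (n' + p * q * B * a) / q = n' / q + p * B * a := by
      have : n' + p * q * B * a = n' + (p * B * a) * q := by ring
      rw [this, Nat.add_mul_div_right _ _ hq0]
    rw [hdivstep]
    -- decompose a
    have ha0 : a % q < q := Nat.mod_lt _ hq0
    have hbq : b / q < p := Nat.div_lt_of_lt_mul (by rw [mul_comm]; exact hw b (by simp))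
    have hrem : n' / q % B < B := Nat.mod_lt _ hBpos
    have hgab : g p q a b = a % q * p + b / q := rfl
    have key : n' / q + p * B * a
        = g p q a b * B + n' / q % B + p * q * B * (a / q) := by
      conv_lhs => rw [hsplit, ← Nat.div_add_mod a q]
      rw [hgab]; ring
    rw [key, Nat.add_mul_mod_self_left]
    have hglt : g p q a b + 1 ≤ p * q := by rw [hgab]; nlinarith
    have hlt : g p q a b * B + n' / q % B < p * q * B := by nlinarith [hrem]
    rw [Nat.mod_eq_of_lt hlt]; ring

lemma Gw_iter_bound {p q : ℕ} (hp : 0 < p) (hq : 0 < q) (s : ℕ) :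
    ∀ w : List ℕ, (∀ x ∈ w, x < p * q) → ∀ x ∈ (Gw p q)^[s] w, x < p * q := by
  induction s with
  | zero => intro w hw; simpa using hw
  | succ s ih =>
    intro w hw
    rw [Function.iterate_succ_apply]
    exact ih _ (Gw_bound hp hq w hw)

lemma Gw_iter_length (p q s : ℕ) :
    ∀ w : List ℕ, ((Gw p q)^[s] w).length = w.length - s := by
  induction s with
  | zero => simp
  | succ s ih =>
    intro w
    rw [Function.iterate_succ_apply, ih, Gw_length]
    omega

lemma mod_pow_div_mod {p q : ℕ} (hq0 : 0 < q) (m a : ℕ) :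
    a % (p * q) ^ (m + 1) / q % (p * q) ^ m = a / q % (p * q) ^ m := by
  obtain ⟨B, hB⟩ : ∃ B, B = (p * q) ^ m := ⟨_, rfl⟩
  obtain ⟨M, hMdef⟩ : ∃ M, M = (p * q) ^ (m + 1) := ⟨_, rfl⟩
  rw [← hB, ← hMdef]
  have hMeq : M = p * B * q := by rw [hMdef, hB, pow_succ]; ring
  obtain ⟨c, hc⟩ : ∃ c, c = a / M := ⟨_, rfl⟩
  have hmd := Nat.mod_add_div a M
  rw [← hc] at hmd
  have hmodeq : a % M = a - c * (p * B) * q := by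
    have e0 : c * (p * B) * q = M * c := by rw [hMeq]; ring
    rw [e0]; omega
  have hD : q * (c * (p * B)) ≤ a := by
    have e0 : q * (c * (p * B)) = M * c := by rw [hMeq]; ring
    omega
  have hstep : (a - c * (p * B) * q) / q = a / q - c * (p * B) := by
    have e1 : c * (p * B) * q = q * (c * (p * B)) := by ring
    rw [e1, Nat.sub_mul_div a q _]
  rw [hmodeq, hstep]
  have hle : B * (c * p) ≤ a / q := by
    rw [Nat.le_div_iff_mul_le hq0]
    calc B * (c * p) * q = q * (c * (p * B)) := by ring
      _ ≤ a := hD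
  have e2 : c * (p * B) = B * (c * p) := by ring
  rw [e2, Nat.sub_mul_mod hle]

lemma intw_Gw_iter {p q : ℕ} (hp : 2 ≤ p) (hq : 2 ≤ q) (s : ℕ) :
    ∀ w : List ℕ, (∀ x ∈ w, x < p * q) →
      intw (p * q) ((Gw p q)^[s] w)
        = intw (p * q) w / q ^ s % (p * q) ^ (w.length - s) := by
  have hone : 1 < p * q := by nlinarith
  induction s with
  | zero =>
    intro w hw
    simpa using (Nat.mod_eq_of_lt (intw_lt hone hw)).symm
  | succ s ih =>
    intro w hw
    rw [Function.iterate_succ_apply', intw_Gw hp hq _ (Gw_iter_bound (by omega) (by omega) s w hw),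
      ih w hw, Gw_iter_length]
    rcases le_or_gt w.length s with hks | hks
    · have h0 : w.length - s = 0 := by omega
      have h1 : w.length - (s + 1) = 0 := by omega
      have h2 : w.length - s - 1 = 0 := by omega
      simp [h0, h1, h2, Nat.mod_one]
    · obtain ⟨m, hm⟩ : ∃ m, w.length - s = m + 1 := ⟨w.length - s - 1, by omega⟩
      have hm2 : w.length - (s + 1) = m := by omega
      rw [hm, hm2]
      simp only [Nat.add_sub_cancel]
      rw [mod_pow_div_mod (by omega), Nat.div_div_eq_div_mul, ← pow_succ]

lemma Fw_iter (p q t : ℕ) : ∀ w : List ℕ, (Fw p q)^[t] w = (Gw p q)^[2 * t] w := by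
  induction t with
  | zero => simp
  | succ t ih =>
    intro w
    rw [Function.iterate_succ_apply, ih, show 2 * (t + 1) = 2 * t + 1 + 1 from by ring,
      Function.iterate_succ_apply, Function.iterate_succ_apply]
    rfl

theorem stmt14 (p q : ℕ) (hp : 2 ≤ p) (hq : 2 ≤ q) (hpq : Nat.Coprime p q)
    (t : ℕ) (ht : 0 < t) (k : ℕ) (hk : 2 * t + 1 ≤ k) (w₁ w₂ : List ℕ)
    (hw₁ : w₁.length = k) (hw₂ : w₂.length = k)
    (hb₁ : ∀ x ∈ w₁, x < p * q) (hb₂ : ∀ x ∈ w₂, x < p * q) :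
    (intw (p * q) w₁ < q ^ (2 * t) → intw (p * q) ((Fw p q)^[t] w₁) = 0) ∧
    (intw (p * q) w₂ ≡ intw (p * q) w₁ + q ^ (2 * t) [MOD (p * q) ^ k] →
      intw (p * q) ((Fw p q)^[t] w₂) ≡ intw (p * q) ((Fw p q)^[t] w₁) + 1
        [MOD (p * q) ^ (k - 2 * t)]) := by
  have hone : 1 < p * q := by nlinarith
  have hq0 : 0 < q := by omega
  have hQ0 : 0 < q ^ (2 * t) := pow_pos hq0 _
  have h1 : intw (p * q) ((Fw p q)^[t] w₁)
      = intw (p * q) w₁ / q ^ (2 * t) % (p * q) ^ (k - 2 * t) := by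
    rw [Fw_iter, intw_Gw_iter hp hq _ w₁ hb₁, hw₁]
  have h2 : intw (p * q) ((Fw p q)^[t] w₂)
      = intw (p * q) w₂ / q ^ (2 * t) % (p * q) ^ (k - 2 * t) := by
    rw [Fw_iter, intw_Gw_iter hp hq _ w₂ hb₂, hw₂]
  set n₁ := intw (p * q) w₁ with hn₁
  set n₂ := intw (p * q) w₂ with hn₂
  set Q := q ^ (2 * t) with hQ
  set N := (p * q) ^ (k - 2 * t) with hN
  constructor
  · intro hlt
    rw [h1, Nat.div_eq_of_lt hlt, Nat.zero_mod]
  · intro hmod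
    rw [h1, h2]
    have hn₁lt : n₁ < (p * q) ^ k := hw₁ ▸ intw_lt hone hb₁
    have hn₂lt : n₂ < (p * q) ^ k := hw₂ ▸ intw_lt hone hb₂
    have hQM : Q ≤ (p * q) ^ k := by
      calc Q ≤ (p * q) ^ (2 * t) := Nat.pow_le_pow_left (Nat.le_mul_of_pos_left q (by omega)) _
        _ ≤ (p * q) ^ k := Nat.pow_le_pow_right (by omega) (by omega)
    have hMeqn : (p * q) ^ k = Q * (p ^ (2 * t) * N) := by
      rw [hQ, hN]
      conv_lhs => rw [show k = 2 * t + (k - 2 * t) from by omega]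
      rw [pow_add, mul_pow]
      ring
    have hn₂eq : n₂ = (n₁ + Q) % (p * q) ^ k := by
      rw [← Nat.mod_eq_of_lt hn₂lt]; exact hmod
    suffices hsuff : n₂ / Q ≡ n₁ / Q + 1 [MOD N] by
      calc n₂ / Q % N ≡ n₂ / Q [MOD N] := Nat.mod_modEq _ _
        _ ≡ n₁ / Q + 1 [MOD N] := hsuff
        _ ≡ n₁ / Q % N + 1 [MOD N] := ((Nat.mod_modEq (n₁ / Q) N).add_right 1).symm
    rcases lt_or_ge (n₁ + Q) ((p * q) ^ k) with hcase | hcase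
    · rw [hn₂eq, Nat.mod_eq_of_lt hcase, Nat.add_div_right _ hQ0]
    · have hn₂eq' : n₂ = n₁ + Q - Q * (p ^ (2 * t) * N) := by
        rw [hn₂eq, Nat.mod_eq_sub_mod hcase, ← hMeqn,
          Nat.mod_eq_of_lt (by omega)]
      have hdiv : n₂ / Q = n₁ / Q + 1 - p ^ (2 * t) * N := by
        rw [hn₂eq', Nat.sub_mul_div _ _ _, Nat.add_div_right _ hQ0]
      have hcase' : Q * (p ^ (2 * t) * N) ≤ n₁ + Q := hMeqn ▸ hcase
      have hle : N * p ^ (2 * t) ≤ n₁ / Q + 1 := by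
        have h := (Nat.le_div_iff_mul_le hQ0).2
          (show N * p ^ (2 * t) * Q ≤ n₁ + Q by
            calc N * p ^ (2 * t) * Q = Q * (p ^ (2 * t) * N) := by ring
              _ ≤ n₁ + Q := hcase')
        rwa [Nat.add_div_right _ hQ0] at h
      have e : p ^ (2 * t) * N = N * p ^ (2 * t) := by ring
      rw [hdiv, e]
      exact Nat.sub_mul_mod hle
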